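/- The partial transposition σ_insep^{T₂} of the state σ_insep on ℂ² ⊗ ℂ⁴ is not positive semidefinite; consequently σ_insep is not separable. -/

import Mathlib

open scoped ComplexOrder
open Matrix Kronecker

noncomputable section

/-- A quantum state: a positive semidefinite complex matrix of trace 1. -/
def IsState {n : Type*} [Fintype n] [DecidableEq n] (ρ : Matrix n n ℂ) : Prop :=
  ρ.PosSemidef ∧ ρ.trace = 1

/-- Separability: membership in the closure of the convex hull of Kronecker
products of states. -/
def IsSepState {m₁ m₂ : ℕ}
    (ρ : Matrix (Fin m₁ × Fin m₂) (Fin m₁ × Fin m₂) ℂ) : Prop :=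
  ρ ∈ closure (convexHull ℝ
    {σ : Matrix (Fin m₁ × Fin m₂) (Fin m₁ × Fin m₂) ℂ |
      ∃ (A : Matrix (Fin m₁) (Fin m₁) ℂ) (B : Matrix (Fin m₂) (Fin m₂) ℂ),
        IsState A ∧ IsState B ∧ σ = A ⊗ₖ B})

/-- The rank-one operator `|ψ⟩⟨ψ|` (orthogonal projection on `span ψ` for unit `ψ`). -/
def proj {n : Type*} (ψ : n → ℂ) : Matrix n n ℂ :=
  fun i j => ψ i * star (ψ j)

/-- The tensor (Kronecker) product of two vectors. -/
def tens {m₁ m₂ : ℕ} (ψ : Fin m₁ → ℂ) (φ : Fin m₂ → ℂ) :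
    Fin m₁ × Fin m₂ → ℂ := fun p => ψ p.1 * φ p.2

/-- Partial transposition on the second factor. -/
def pt₂ {m₁ m₂ : ℕ} (ρ : Matrix (Fin m₁ × Fin m₂) (Fin m₁ × Fin m₂) ℂ) :
    Matrix (Fin m₁ × Fin m₂) (Fin m₁ × Fin m₂) ℂ :=
  fun p q => ρ (p.1, q.2) (q.1, p.2)

/-- Standard basis vectors of `ℂ^n`. -/
def e (n : ℕ) (i : Fin n) : Fin n → ℂ := fun j => if j = i then 1 else 0

/-- The vectors `Ψ_i = (e₁⊗e_i + e₂⊗e_{i+1})/√2`, `i = 1, 2, 3`. -/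
def Ψ24 (i : Fin 3) : Fin 2 × Fin 4 → ℂ :=
  (Real.sqrt 2 : ℂ)⁻¹ • (tens (e 2 0) (e 4 i.castSucc) + tens (e 2 1) (e 4 i.succ))

/-- The inseparable state `σ_insep = (2/7) Σ_i P_{Ψ_i} + (1/7) P_{e₁⊗e₄}`. -/
def σinsep : Matrix (Fin 2 × Fin 4) (Fin 2 × Fin 4) ℂ :=
  (2 / 7 : ℂ) • ∑ i : Fin 3, proj (Ψ24 i) +
    (1 / 7 : ℂ) • proj (tens (e 2 0) (e 4 3))

/-- The product vector `Φ_b = e₂ ⊗ (√((1+b)/2) e₁ + √((1−b)/2) e₃)`. -/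
def Φb (b : ℝ) : Fin 2 × Fin 4 → ℂ :=
  tens (e 2 1) (fun j =>
    if j = 0 then (Real.sqrt ((1 + b) / 2) : ℂ)
    else if j = 2 then (Real.sqrt ((1 - b) / 2) : ℂ) else 0)

/-- The Horodecki state `σ_b = (7b/(7b+1)) σ_insep + (1/(7b+1)) P_{Φ_b}`. -/
def σB (b : ℝ) : Matrix (Fin 2 × Fin 4) (Fin 2 × Fin 4) ℂ :=
  ((7 * b / (7 * b + 1) : ℝ) : ℂ) • σinsep +
    ((1 / (7 * b + 1) : ℝ) : ℂ) • proj (Φb b)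

/-! ### Auxiliary lemmas -/

lemma aux_sqrt2 : ((Real.sqrt 2 : ℂ))⁻¹ * ((Real.sqrt 2 : ℂ))⁻¹ = (2 : ℂ)⁻¹ := by
  rw [← mul_inv, ← Complex.ofReal_mul, Real.mul_self_sqrt (by norm_num)]
  norm_num

lemma aux_cs0 : Fin.castSucc (0:Fin 3) = (0:Fin 4) := by decide
lemma aux_cs1 : Fin.castSucc (1:Fin 3) = (1:Fin 4) := by decide
lemma aux_cs2 : Fin.castSucc (2:Fin 3) = (2:Fin 4) := by decide
lemma aux_s0 : Fin.succ (0:Fin 3) = (1:Fin 4) := by decide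
lemma aux_s1 : Fin.succ (1:Fin 3) = (2:Fin 4) := by decide
lemma aux_s2 : Fin.succ (2:Fin 3) = (3:Fin 4) := by decide

lemma aux_star_e : ∀ (n : ℕ) (i : Fin n) (j : Fin n), star (e n i j) = e n i j := by
  intro n i j; simp only [e]; split_ifs <;> norm_num

lemma aux_star_Ψ : ∀ (i : Fin 3) (r : Fin 2 × Fin 4), star (Ψ24 i r) = Ψ24 i r := by
  intro i r
  simp only [Ψ24, tens, Pi.smul_apply, Pi.add_apply, smul_eq_mul, star_mul', star_add,
    aux_star_e]
  norm_num

lemma aux_star_tens :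
    ∀ (r : Fin 2 × Fin 4), star (tens (e 2 0) (e 4 3) r) = tens (e 2 0) (e 4 3) r := by
  intro r; simp only [tens, star_mul', aux_star_e]

lemma aux_sig_entry (p q : Fin 2 × Fin 4) : σinsep p q =
    (2/7 : ℂ) * ((Real.sqrt 2 : ℂ)⁻¹ * ((e 2 0 p.1 * e 4 0 p.2 + e 2 1 p.1 * e 4 1 p.2)) *
        ((Real.sqrt 2 : ℂ)⁻¹ * (e 2 0 q.1 * e 4 0 q.2 + e 2 1 q.1 * e 4 1 q.2)) +
      (Real.sqrt 2 : ℂ)⁻¹ * ((e 2 0 p.1 * e 4 1 p.2 + e 2 1 p.1 * e 4 2 p.2)) *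
        ((Real.sqrt 2 : ℂ)⁻¹ * (e 2 0 q.1 * e 4 1 q.2 + e 2 1 q.1 * e 4 2 q.2)) +
      (Real.sqrt 2 : ℂ)⁻¹ * ((e 2 0 p.1 * e 4 2 p.2 + e 2 1 p.1 * e 4 3 p.2)) *
        ((Real.sqrt 2 : ℂ)⁻¹ * (e 2 0 q.1 * e 4 2 q.2 + e 2 1 q.1 * e 4 3 q.2))) +
    (1/7 : ℂ) * (e 2 0 p.1 * e 4 3 p.2 * (e 2 0 q.1 * e 4 3 q.2)) := by
  simp only [σinsep, Matrix.add_apply, Matrix.smul_apply, Matrix.sum_apply, proj, smul_eq_mul,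
    aux_star_Ψ, aux_star_tens, Fin.sum_univ_three]
  simp only [Ψ24, tens, Pi.smul_apply, Pi.add_apply, smul_eq_mul, aux_cs0, aux_cs1, aux_cs2,
    aux_s0, aux_s1, aux_s2]

/-- The witness vector `e₁⊗e₂ − e₂⊗e₁`. -/
def auxV : Fin 2 × Fin 4 → ℂ := fun p => if p = (0,1) then 1 else if p = (1,0) then -1 else 0

lemma aux_key : star auxV ⬝ᵥ (pt₂ σinsep) *ᵥ auxV = -(1/7 : ℂ) := by
  simp only [dotProduct, mulVec, Fintype.sum_prod_type, Fin.sum_univ_two, Fin.sum_univ_four,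
    auxV, Pi.star_apply]
  simp only [Prod.mk.injEq]
  simp
  simp only [pt₂, aux_sig_entry]
  simp [e]
  ring_nf
  rw [show ((Real.sqrt 2:ℂ))⁻¹^2 = ((Real.sqrt 2 : ℂ))⁻¹ * ((Real.sqrt 2 : ℂ))⁻¹ from sq _,
    aux_sqrt2]
  norm_num

lemma aux_isClosed_nonneg_complex : IsClosed {z : ℂ | 0 ≤ z} := by
  have h : {z : ℂ | 0 ≤ z} = Complex.re ⁻¹' Set.Ici 0 ∩ Complex.im ⁻¹' {0} := by
    ext z
    simp [Complex.le_def, eq_comm]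
  rw [h]
  exact (isClosed_Ici.preimage Complex.continuous_re).inter
    (isClosed_singleton.preimage Complex.continuous_im)

lemma aux_continuous_entry {n : Type*} (i j : n) :
    Continuous fun M : Matrix n n ℂ => M i j :=
  (continuous_apply j).comp (continuous_apply i)

lemma aux_isClosed_posSemidef {n : Type*} [Fintype n] :
    IsClosed {M : Matrix n n ℂ | M.PosSemidef} := by
  have hset : {M : Matrix n n ℂ | M.PosSemidef} =
      {M : Matrix n n ℂ | Mᴴ = M} ∩ ⋂ x : n → ℂ, {M | 0 ≤ star x ⬝ᵥ M *ᵥ x} := by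
    ext M
    simp only [Set.mem_setOf_eq, Set.mem_inter_iff, Set.mem_iInter, Matrix.posSemidef_iff_dotProduct_mulVec,
      Matrix.IsHermitian]
  rw [hset]
  apply IsClosed.inter
  · apply isClosed_eq _ continuous_id
    exact continuous_pi fun i => continuous_pi fun j => (aux_continuous_entry j i).star
  · apply isClosed_iInter
    intro x
    have hc : Continuous fun M : Matrix n n ℂ => star x ⬝ᵥ M *ᵥ x := by
      simp only [dotProduct, Matrix.mulVec]
      exact continuous_finset_sum _ fun i _ => Continuous.mul continuous_const
        (continuous_finset_sum _ fun j _ => ((aux_continuous_entry i j).mul continuous_const))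
    exact aux_isClosed_nonneg_complex.preimage hc

lemma aux_kron_conjTranspose {l m : Type*} (A : Matrix l l ℂ) (B : Matrix m m ℂ) :
    (A ⊗ₖ B)ᴴ = Aᴴ ⊗ₖ Bᴴ := by
  ext p q
  simp [Matrix.conjTranspose_apply, Matrix.kroneckerMap_apply, mul_comm]

lemma aux_posSemidef_kron {l m : Type*} [Fintype l] [DecidableEq l] [Fintype m] [DecidableEq m]
    {A : Matrix l l ℂ} {B : Matrix m m ℂ} (hA : A.PosSemidef) (hB : B.PosSemidef) :
    (A ⊗ₖ B).PosSemidef := by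
  exact hA.kronecker hB

lemma aux_posSemidef_real_smul {n : Type*} [Fintype n] {M : Matrix n n ℂ}
    (hM : M.PosSemidef) {a : ℝ} (ha : 0 ≤ a) : (a • M).PosSemidef := by
  have h : (a • M) = (a : ℂ) • M := by
    ext i j; simp [Complex.real_smul]
  rw [h]
  rw [Matrix.posSemidef_iff_dotProduct_mulVec]
  constructor
  · unfold Matrix.IsHermitian
    rw [Matrix.conjTranspose_smul, hM.1]
    congr 1
    simp [Complex.ext_iff]
  · intro x
    have h2 := hM.dotProduct_mulVec_nonneg x
    rw [Matrix.smul_mulVec, dotProduct_smul, smul_eq_mul]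
    have ha' : (0:ℂ) ≤ (a:ℂ) := by rw [Complex.le_def]; simp [ha]
    exact mul_nonneg ha' h2

lemma aux_pt₂_kron {m₁ m₂ : ℕ} (A : Matrix (Fin m₁) (Fin m₁) ℂ)
    (B : Matrix (Fin m₂) (Fin m₂) ℂ) : pt₂ (A ⊗ₖ B) = A ⊗ₖ Bᵀ := by
  ext p q
  simp [pt₂, Matrix.kroneckerMap_apply, Matrix.transpose_apply]

/-- The partial transposition of `σ_insep` is not positive
semidefinite; consequently `σ_insep` is not separable. -/
theorem σinsep_pt₂_not_posSemidef :
    ¬ (pt₂ σinsep).PosSemidef ∧ ¬ IsSepState σinsep := by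
  have hnot : ¬ (pt₂ σinsep).PosSemidef := by
    intro h
    have h2 := h.dotProduct_mulVec_nonneg auxV
    rw [aux_key] at h2
    rw [Complex.le_def] at h2
    norm_num at h2
  refine ⟨hnot, fun hsep => hnot ?_⟩
  -- the set of matrices with PSD partial transpose
  set S : Set (Matrix (Fin 2 × Fin 4) (Fin 2 × Fin 4) ℂ) :=
    {ρ | (pt₂ ρ).PosSemidef} with hS
  have hcont : Continuous (pt₂ : Matrix (Fin 2 × Fin 4) (Fin 2 × Fin 4) ℂ →
      Matrix (Fin 2 × Fin 4) (Fin 2 × Fin 4) ℂ) :=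
    continuous_pi fun p => continuous_pi fun q => aux_continuous_entry _ _
  have hclosed : IsClosed S := aux_isClosed_posSemidef.preimage hcont
  have hconvex : Convex ℝ S := by
    intro ρ hρ σ hσ a b ha hb hab
    have : pt₂ (a • ρ + b • σ) = a • pt₂ ρ + b • pt₂ σ := rfl
    show (pt₂ (a • ρ + b • σ)).PosSemidef
    rw [this]
    exact (aux_posSemidef_real_smul hρ ha).add (aux_posSemidef_real_smul hσ hb)
  have hsub : {σ : Matrix (Fin 2 × Fin 4) (Fin 2 × Fin 4) ℂ |
      ∃ (A : Matrix (Fin 2) (Fin 2) ℂ) (B : Matrix (Fin 4) (Fin 4) ℂ),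
        IsState A ∧ IsState B ∧ σ = A ⊗ₖ B} ⊆ S := by
    rintro σ ⟨A, B, hA, hB, rfl⟩
    show (pt₂ (A ⊗ₖ B)).PosSemidef
    rw [aux_pt₂_kron]
    exact aux_posSemidef_kron hA.1 hB.1.transpose
  have := closure_minimal (convexHull_min hsub hconvex) hclosed hsep
  exact this
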